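/- Let A be Hermitian with 0 ≤ A ≤ I and Z positive definite with extremal eigenvalues a ≥ b > 0. Then the operator norm of Z^{-1/2} A Z^{1/2} is at most (a+b)/(2√(ab)). -/

import Mathlib

set_option maxHeartbeats 1000000
set_option synthInstance.maxHeartbeats 400000

open scoped ComplexOrder
open Matrix

namespace Aux
variable {n : ℕ} {Z : Matrix (Fin n) (Fin n) ℂ} (hZ : Z.IsHermitian)

lemma cfc_mul (f g : ℝ → ℝ) :
    hZ.cfc f * hZ.cfc g = hZ.cfc (fun x => f x * g x) := by
  have h : (star (hZ.eigenvectorUnitary : Matrix (Fin n) (Fin n) ℂ)) *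
      (hZ.eigenvectorUnitary : Matrix (Fin n) (Fin n) ℂ) = 1 :=
    Unitary.star_mul_self_of_mem (SetLike.coe_mem _)
  have assoc : ∀ (a b c d e f : Matrix (Fin n) (Fin n) ℂ),
      (a*b*c)*(d*e*f) = a*(b*(c*d)*e)*f := by
    intros; simp only [mul_assoc]
  have hfun : (fun i => (RCLike.ofReal ∘ f ∘ hZ.eigenvalues) i *
      (RCLike.ofReal ∘ g ∘ hZ.eigenvalues) i : Fin n → ℂ) =
      RCLike.ofReal ∘ (fun x => f x * g x) ∘ hZ.eigenvalues := by
    funext i; simp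
  simp only [Matrix.IsHermitian.cfc, Unitary.conjStarAlgAut_apply]
  rw [assoc, h, mul_one, diagonal_mul_diagonal, hfun]

lemma cfc_congr_eig {f g : ℝ → ℝ} (h : ∀ i, f (hZ.eigenvalues i) = g (hZ.eigenvalues i)) :
    hZ.cfc f = hZ.cfc g := by
  have hfun : (RCLike.ofReal ∘ f ∘ hZ.eigenvalues : Fin n → ℂ) =
      RCLike.ofReal ∘ g ∘ hZ.eigenvalues := by
    funext i; simp [h i]
  simp only [Matrix.IsHermitian.cfc, hfun]

lemma cfc_one : hZ.cfc (fun _ => 1) = 1 := by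
  have hfun : (RCLike.ofReal ∘ (fun _ => (1:ℝ)) ∘ hZ.eigenvalues : Fin n → ℂ) =
      fun _ => 1 := by funext i; simp
  simp only [Matrix.IsHermitian.cfc, Unitary.conjStarAlgAut_apply, hfun, diagonal_one, mul_one]
  exact Unitary.mul_star_self_of_mem (SetLike.coe_mem _)

lemma cfc_smul (c : ℝ) (f : ℝ → ℝ) :
    hZ.cfc (fun x => c * f x) = (c : ℂ) • hZ.cfc f := by
  have hfun : (RCLike.ofReal ∘ (fun x => c * f x) ∘ hZ.eigenvalues : Fin n → ℂ) =
      (c : ℂ) • (RCLike.ofReal ∘ f ∘ hZ.eigenvalues) := by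
    funext i; simp
  simp only [Matrix.IsHermitian.cfc, Unitary.conjStarAlgAut_apply, hfun, diagonal_smul, Matrix.mul_smul, Matrix.smul_mul]

lemma cfc_sub (f g : ℝ → ℝ) :
    hZ.cfc (fun x => f x - g x) = hZ.cfc f - hZ.cfc g := by
  have hfun : (RCLike.ofReal ∘ (fun x => f x - g x) ∘ hZ.eigenvalues : Fin n → ℂ) =
      (fun i => (RCLike.ofReal ∘ f ∘ hZ.eigenvalues) i - (RCLike.ofReal ∘ g ∘ hZ.eigenvalues) i) := by
    funext i; simp
  simp only [Matrix.IsHermitian.cfc, Unitary.conjStarAlgAut_apply, hfun, ← diagonal_sub, Matrix.mul_sub, Matrix.sub_mul]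

lemma cfc_psd {f : ℝ → ℝ} (h : ∀ i, 0 ≤ f (hZ.eigenvalues i)) :
    (hZ.cfc f).PosSemidef := by
  simp only [Matrix.IsHermitian.cfc, Unitary.conjStarAlgAut_apply]
  rw [star_eq_conjTranspose]
  apply Matrix.PosSemidef.mul_mul_conjTranspose_same
  refine posSemidef_diagonal_iff.mpr fun i => ?_
  simpa using (h i)

lemma cfc_herm (f : ℝ → ℝ) : (hZ.cfc f).IsHermitian := by
  rw [← hZ.cfc_eq]
  exact cfc_predicate _ _

end Aux

namespace Aux

lemma inner_psd {n : ℕ} {M : Matrix (Fin n) (Fin n) ℂ} (hM : M.PosSemidef)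
    (x : EuclideanSpace ℂ (Fin n)) :
    0 ≤ RCLike.re (inner ℂ x (toEuclideanCLM (𝕜 := ℂ) M x) : ℂ) := by
  rw [EuclideanSpace.inner_eq_star_dotProduct, ofLp_toEuclideanCLM, dotProduct_comm]
  exact hM.re_dotProduct_nonneg _

lemma inner_herm {n : ℕ} {M : Matrix (Fin n) (Fin n) ℂ} (hM : M.IsHermitian)
    (x y : EuclideanSpace ℂ (Fin n)) :
    (inner ℂ (toEuclideanCLM (𝕜 := ℂ) M x) y : ℂ) = inner ℂ x (toEuclideanCLM (𝕜 := ℂ) M y) := by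
  have hstarM : star M = M := by rw [Matrix.star_eq_conjTranspose, hM.eq]
  have hsa : _root_.IsSelfAdjoint (toEuclideanCLM (𝕜 := ℂ) M) := by
    show star _ = _
    rw [← StarHomClass.map_star, hstarM]
  conv_lhs => rw [← hsa.adjoint_eq]
  exact ContinuousLinearMap.adjoint_inner_left _ _ _

end Aux

theorem stmt_18 (n : ℕ) (A Z : Matrix (Fin n) (Fin n) ℂ)
    (hA0 : A.PosSemidef) (hA1 : (1 - A).PosSemidef) (hZ : Z.PosDef) (a b : ℝ)
    (ha : ∀ i, hZ.1.eigenvalues i ≤ a) (ha' : ∃ i, hZ.1.eigenvalues i = a)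
    (hb : ∀ i, b ≤ hZ.1.eigenvalues i) (hb' : ∃ i, hZ.1.eigenvalues i = b) :
    ‖Matrix.toEuclideanCLM (𝕜 := ℂ)
        (hZ.1.cfc (fun x : ℝ => x ^ (-(1 / 2) : ℝ)) * A *
          hZ.1.cfc (fun x : ℝ => x ^ ((1 / 2) : ℝ)))‖ ≤
      (a + b) / (2 * Real.sqrt (a * b)) := by
  obtain ⟨ib, hib⟩ := hb'
  have hev : ∀ i, 0 < hZ.1.eigenvalues i := fun i => hZ.eigenvalues_pos i
  have hbpos : 0 < b := hib ▸ hev ib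
  have hba : b ≤ a := hib ▸ ha ib
  have hapos : 0 < a := lt_of_lt_of_le hbpos hba
  set P := hZ.1.cfc (fun x : ℝ => x ^ ((1 / 2) : ℝ)) with hP
  set N := hZ.1.cfc (fun x : ℝ => x ^ (-(1 / 2) : ℝ)) with hN
  have hPherm : P.IsHermitian := Aux.cfc_herm hZ.1 _
  have hNherm : N.IsHermitian := Aux.cfc_herm hZ.1 _
  have hAherm : A.IsHermitian := hA0.1
  -- the key positive semidefinite combination
  have hM1psd : (((a + b : ℝ) : ℂ) • 1 - P * P - ((a * b : ℝ) : ℂ) • (N * N)).PosSemidef := by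
    rw [hP, hN, Aux.cfc_mul, Aux.cfc_mul, ← Aux.cfc_smul, ← Aux.cfc_one hZ.1, ← Aux.cfc_smul,
      ← Aux.cfc_sub, ← Aux.cfc_sub]
    apply Aux.cfc_psd
    intro i
    set μ := hZ.1.eigenvalues i with hμ
    have hμpos : 0 < μ := hev i
    have h1 : μ ^ ((1 / 2 : ℝ)) * μ ^ ((1 / 2 : ℝ)) = μ := by
      rw [← Real.rpow_add hμpos]; norm_num
    have h2 : μ ^ (-(1 / 2) : ℝ) * μ ^ (-(1 / 2) : ℝ) = μ⁻¹ := by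
      rw [← Real.rpow_add hμpos]
      norm_num [Real.rpow_neg_one]
    rw [h1, h2, mul_one]
    have hbμ : b ≤ μ := hb i
    have hμa : μ ≤ a := ha i
    have key : a * b * μ⁻¹ ≤ (a + b) - μ := by
      rw [← div_eq_mul_inv, div_le_iff₀ hμpos]
      nlinarith [mul_nonneg (sub_nonneg.2 hμa) (sub_nonneg.2 hbμ)]
    linarith
  -- A - A * A is positive semidefinite
  have hAA : (A - A * A).PosSemidef := by
    obtain ⟨s, hs1, hss⟩ : ∃ s : Matrix (Fin n) (Fin n) ℂ, s.PosSemidef ∧ s * s = A := by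
      open scoped MatrixOrder in
      exact ⟨CFC.sqrt A, (CFC.sqrt_nonneg A).posSemidef, CFC.sqrt_mul_sqrt_self A hA0.nonneg⟩
    have key := hA1.mul_mul_conjTranspose_same s
    have heq : s * (1 - A) * sᴴ = A - A * A := by
      rw [hs1.1, ← hss]
      noncomm_ring
    rwa [heq] at key
  -- pass to the adjoint
  have hstar : star (N * A * P) = P * (A * N) := by
    rw [StarMul.star_mul, StarMul.star_mul, Matrix.star_eq_conjTranspose, Matrix.star_eq_conjTranspose,
      Matrix.star_eq_conjTranspose, hPherm.eq, hAherm.eq, hNherm.eq]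
  have hnorm : ‖toEuclideanCLM (𝕜 := ℂ) (N * A * P)‖ =
      ‖toEuclideanCLM (𝕜 := ℂ) (P * (A * N))‖ := by
    rw [← hstar, StarHomClass.map_star, ContinuousLinearMap.star_eq_adjoint]
    exact (ContinuousLinearMap.adjoint.norm_map _).symm
  rw [hnorm]
  have hsab : 0 < Real.sqrt (a * b) := Real.sqrt_pos.2 (by positivity)
  have hc0 : 0 ≤ (a + b) / (2 * Real.sqrt (a * b)) := by
    apply div_nonneg (by linarith) (by positivity)
  refine ContinuousLinearMap.opNorm_le_bound _ hc0 fun y => ?_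
  set x : EuclideanSpace ℂ (Fin n) := toEuclideanCLM (𝕜 := ℂ) N y with hx
  set w : EuclideanSpace ℂ (Fin n) := toEuclideanCLM (𝕜 := ℂ) A x with hw
  set u : EuclideanSpace ℂ (Fin n) := toEuclideanCLM (𝕜 := ℂ) N w with hu
  have happ : (toEuclideanCLM (𝕜 := ℂ) (P * (A * N))) y = toEuclideanCLM (𝕜 := ℂ) P w := by
    rw [_root_.map_mul, _root_.map_mul]
    rfl
  rw [happ]
  -- key inequality (I1)
  have h0 := Aux.inner_psd hM1psd w
  have hPP : RCLike.re (inner ℂ w (toEuclideanCLM (𝕜 := ℂ) (P * P) w) : ℂ) =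
      ‖toEuclideanCLM (𝕜 := ℂ) P w‖ ^ 2 := by
    rw [_root_.map_mul, ContinuousLinearMap.mul_apply,
      ← Aux.inner_herm hPherm w (toEuclideanCLM (𝕜 := ℂ) P w), inner_self_eq_norm_sq]
  have hNN : RCLike.re (inner ℂ w (toEuclideanCLM (𝕜 := ℂ) (N * N) w) : ℂ) = ‖u‖ ^ 2 := by
    rw [_root_.map_mul, ContinuousLinearMap.mul_apply,
      ← Aux.inner_herm hNherm w (toEuclideanCLM (𝕜 := ℂ) N w), hu, inner_self_eq_norm_sq]
  have key1 : ‖toEuclideanCLM (𝕜 := ℂ) P w‖ ^ 2 ≤ (a + b) * ‖w‖ ^ 2 - a * b * ‖u‖ ^ 2 := by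
    have expand : (inner ℂ w (toEuclideanCLM (𝕜 := ℂ)
        (((a + b : ℝ) : ℂ) • 1 - P * P - ((a * b : ℝ) : ℂ) • (N * N)) w) : ℂ)
        = ((a + b : ℝ) : ℂ) * (inner ℂ w w : ℂ)
          - (inner ℂ w (toEuclideanCLM (𝕜 := ℂ) (P * P) w) : ℂ)
          - ((a * b : ℝ) : ℂ) * (inner ℂ w (toEuclideanCLM (𝕜 := ℂ) (N * N) w) : ℂ) := by
      rw [_root_.map_sub, _root_.map_sub, _root_.map_smul, _root_.map_smul, _root_.map_one]
      simp only [ContinuousLinearMap.sub_apply, ContinuousLinearMap.smul_apply,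
        ContinuousLinearMap.one_apply]
      rw [inner_sub_right, inner_sub_right, inner_smul_right, inner_smul_right]
    have e1 : RCLike.re (((a + b : ℝ) : ℂ) * (inner ℂ w w : ℂ)) =
        (a + b) * RCLike.re (inner ℂ w w : ℂ) := RCLike.re_ofReal_mul _ _
    have e2 : RCLike.re (((a * b : ℝ) : ℂ) * (inner ℂ w (toEuclideanCLM (𝕜 := ℂ) (N * N) w) : ℂ)) =
        (a * b) * RCLike.re (inner ℂ w (toEuclideanCLM (𝕜 := ℂ) (N * N) w) : ℂ) :=
      RCLike.re_ofReal_mul _ _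
    rw [expand, _root_.map_sub, _root_.map_sub, e1, e2, hPP, hNN,
      inner_self_eq_norm_sq] at h0
    linarith
  -- (I2)
  have h2 := Aux.inner_psd hAA x
  have hAAx : RCLike.re (inner ℂ x (toEuclideanCLM (𝕜 := ℂ) (A * A) x) : ℂ) = ‖w‖ ^ 2 := by
    rw [_root_.map_mul, ContinuousLinearMap.mul_apply,
      ← Aux.inner_herm hAherm x (toEuclideanCLM (𝕜 := ℂ) A x), hw, inner_self_eq_norm_sq]
  have key2 : ‖w‖ ^ 2 ≤ RCLike.re (inner ℂ x w : ℂ) := by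
    have expand : (inner ℂ x (toEuclideanCLM (𝕜 := ℂ) (A - A * A) x) : ℂ)
        = (inner ℂ x (toEuclideanCLM (𝕜 := ℂ) A x) : ℂ)
          - (inner ℂ x (toEuclideanCLM (𝕜 := ℂ) (A * A) x) : ℂ) := by
      rw [_root_.map_sub]
      simp only [ContinuousLinearMap.sub_apply]
      rw [inner_sub_right]
    rw [expand, _root_.map_sub, hAAx] at h2
    rw [hw]
    linarith
  -- (I3)
  have key3 : RCLike.re (inner ℂ x w : ℂ) ≤ ‖y‖ * ‖u‖ := by
    have hxy : (inner ℂ x w : ℂ) = inner ℂ y u := by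
      rw [hx, Aux.inner_herm hNherm y w, hu]
    rw [hxy]
    exact re_inner_le_norm (𝕜 := ℂ) y u
  have hwyu : ‖w‖ ^ 2 ≤ ‖y‖ * ‖u‖ := key2.trans key3
  have key4 : ‖toEuclideanCLM (𝕜 := ℂ) P w‖ ^ 2 ≤ (a + b) * (‖y‖ * ‖u‖) - a * b * ‖u‖ ^ 2 := by
    have := mul_le_mul_of_nonneg_left hwyu (by linarith : (0:ℝ) ≤ a + b)
    linarith
  have hfin : ‖toEuclideanCLM (𝕜 := ℂ) P w‖ ^ 2 ≤
      ((a + b) / (2 * Real.sqrt (a * b)) * ‖y‖) ^ 2 := by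
    have e : ((a + b) / (2 * Real.sqrt (a * b)) * ‖y‖) ^ 2 =
        (a + b) ^ 2 * ‖y‖ ^ 2 / (4 * (a * b)) := by
      rw [mul_pow, div_pow, mul_pow, Real.sq_sqrt (le_of_lt (mul_pos hapos hbpos))]
      ring
    rw [e, le_div_iff₀ (by positivity)]
    nlinarith [sq_nonneg (2 * (a * b) * ‖u‖ - (a + b) * ‖y‖), key4,
      mul_le_mul_of_nonneg_right key4 (by positivity : (0:ℝ) ≤ 4 * (a * b))]
  have hs2 := Real.sqrt_le_sqrt hfin
  rwa [Real.sqrt_sq (norm_nonneg _), Real.sqrt_sq (mul_nonneg hc0 (norm_nonneg _))] at hs2
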